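/- With the twisted Hodge operators *^A and *^{Aᵗ} defined by ω ∧ (*^B μ) = ⟨(∧ˡB)ω, μ⟩ dx for B = A, Aᵗ, one has on l-forms the identity *^A ∘ *^{Aᵗ} = *^{Aᵗ} ∘ *^A = (−1)^{l(n−l)} det(ι⁻¹Aᵗ) · Id. -/

import Mathlib

open Finset

noncomputable section

abbrev FormIdx (n k : ℕ) := {s : Finset (Fin n) // s.card = k}

abbrev KForm (n k : ℕ) := FormIdx n k → ℝ

def subEmb {n k : ℕ} (S : FormIdx n k) : Fin k → Fin n := fun j => (S.1.orderIsoOfFin S.2 j : Fin n)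

/-- the bilinear pairing `(ω|μ)_A = ⟨(∧ˡA)ω, μ⟩` -/
def pairingA {n k : ℕ} (A : Matrix (Fin n) (Fin n) ℝ) (u v : KForm n k) : ℝ :=
  ∑ T : FormIdx n k, ∑ S : FormIdx n k,
    (A.submatrix (subEmb S) (subEmb T)).det * u T * v S

/-- the linear map on `k`-forms induced by a matrix acting on covectors
(e.g. `formMap Aᵀ = ∧ᵏ(ι⁻¹Aᵗ)`) -/
def formMap {n k : ℕ} (B : Matrix (Fin n) (Fin n) ℝ) (u : KForm n k) : KForm n k :=
  fun S => ∑ T : FormIdx n k, (B.submatrix (subEmb S) (subEmb T)).det * u T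

/-- sign of the shuffle putting the block `t` before the block `s` -/
def shuffleSign {n : ℕ} (t s : Finset (Fin n)) : ℝ :=
  (-1 : ℝ) ^ (∑ x ∈ t, (s.filter (· < x)).card)

/-- exterior (wedge) product -/
def wedgeP {n k l : ℕ} (α : KForm n k) (β : KForm n l) : KForm n (k + l) :=
  fun S => ∑ T : FormIdx n k, if h : T.1 ⊆ S.1 then
    shuffleSign T.1 (S.1 \ T.1) * α T * β ⟨S.1 \ T.1, by
      rw [Finset.card_sdiff, Finset.inter_eq_left.mpr h, S.2, T.2]; omega⟩ else 0

/-- the coefficient of `dx₁∧⋯∧dxₙ` of a top-degree form (zero unless `m = n`) -/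
def topCoeff {n m : ℕ} (v : KForm n m) : ℝ :=
  if h : m = n then v ⟨Finset.univ, by subst h; simp⟩ else 0

/-- the standard Euclidean Hodge star -/
def hodgeStd {n l : ℕ} (hl : l ≤ n) (μ : KForm n l) : KForm n (n - l) :=
  fun S => shuffleSign S.1ᶜ S.1 * μ ⟨S.1ᶜ, by
    rw [Finset.card_compl, S.2, Fintype.card_fin]; omega⟩

/-- re-indexing of a form along an equality of degrees -/
def castForm {n m m' : ℕ} (h : m = m') (v : KForm n m) : KForm n m' :=
  fun S => v ⟨S.1, by rw [S.2, h]⟩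


section AuxProofs

variable {n k l : ℕ}

lemma subEmb_def (S : FormIdx n k) : subEmb S = ⇑(S.1.orderEmbOfFin S.2) := by
  funext j; exact Finset.coe_orderIsoOfFin_apply S.1 S.2 j

lemma subEmb_mem (S : FormIdx n k) (j : Fin k) : subEmb S j ∈ S.1 := by
  rw [subEmb_def]; exact Finset.orderEmbOfFin_mem S.1 S.2 j

lemma subEmb_strictMono (S : FormIdx n k) : StrictMono (subEmb S) := by
  rw [subEmb_def]; exact (S.1.orderEmbOfFin S.2).strictMono

lemma subEmb_injective (S : FormIdx n k) : Function.Injective (subEmb S) :=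
  (subEmb_strictMono S).injective

lemma subEmb_surj (S : FormIdx n k) {y : Fin n} (hy : y ∈ S.1) : ∃ a, subEmb S a = y := by
  rw [subEmb_def]
  have : y ∈ Set.range (S.1.orderEmbOfFin S.2) := by
    rw [Finset.range_orderEmbOfFin]; exact hy
  exact this

def cplS {n l : ℕ} (S : FormIdx n l) : FormIdx n (n - l) :=
  ⟨S.1ᶜ, by rw [Finset.card_compl, S.2, Fintype.card_fin]⟩

def cplT {n l : ℕ} (hl : l ≤ n) (T : FormIdx n (n - l)) : FormIdx n l :=
  ⟨T.1ᶜ, by rw [Finset.card_compl, T.2, Fintype.card_fin]; omega⟩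

lemma shuffleSign_sq (t s : Finset (Fin n)) : shuffleSign t s * shuffleSign t s = 1 := by
  rw [shuffleSign, ← pow_add]
  exact Even.neg_one_pow ⟨_, rfl⟩

lemma shuffleSign_mul_comm {t s : Finset (Fin n)} (h : Disjoint t s) :
    shuffleSign t s * shuffleSign s t = (-1 : ℝ) ^ (t.card * s.card) := by
  rw [shuffleSign, shuffleSign, ← pow_add]
  congr 1
  have key : ∀ x ∈ t, ∀ y ∈ s, ((y < x ∨ x < y) ∧ ¬(y < x ∧ x < y)) := by
    intro x hx y hy
    have hxy : x ≠ y := fun hxy => (Finset.disjoint_left.mp h hx (hxy ▸ hy))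
    constructor
    · rcases lt_or_gt_of_ne hxy.symm with h1 | h1
      · exact Or.inl h1
      · exact Or.inr h1
    · rintro ⟨h1, h2⟩; exact absurd (h1.trans h2) (lt_irrefl _)
  calc (∑ x ∈ t, (s.filter (· < x)).card) + ∑ y ∈ s, (t.filter (· < y)).card
      = ∑ x ∈ t, ∑ y ∈ s, ((if y < x then 1 else 0) + (if x < y then 1 else 0)) := by
        rw [show (∑ x ∈ t, ∑ y ∈ s, ((if y < x then 1 else 0) + (if x < y then 1 else 0)))
            = (∑ x ∈ t, ∑ y ∈ s, (if y < x then 1 else 0))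
              + (∑ x ∈ t, ∑ y ∈ s, (if x < y then 1 else 0)) by
          rw [← Finset.sum_add_distrib]
          exact Finset.sum_congr rfl fun x _ => by rw [← Finset.sum_add_distrib]]
        congr 1
        · refine Finset.sum_congr rfl fun x _ => ?_
          rw [Finset.card_filter]
        · rw [Finset.sum_comm]
          refine Finset.sum_congr rfl fun x _ => ?_
          rw [Finset.card_filter]
    _ = ∑ x ∈ t, ∑ y ∈ s, 1 := by
        refine Finset.sum_congr rfl fun x hx => Finset.sum_congr rfl fun y hy => ?_
        obtain ⟨h1, h2⟩ := key x hx y hy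
        rcases h1 with h1 | h1
        · rw [if_pos h1, if_neg (fun h' => h2 ⟨h1, h'⟩)]
        · rw [if_neg (fun h' => h2 ⟨h', h1⟩), if_pos h1]
    _ = t.card * s.card := by simp [mul_comm]

lemma topCoeff_wedge (hk : k ≤ n) (ω : KForm n k) (ν : KForm n (n - k)) :
    topCoeff (wedgeP ω ν) = ∑ T : FormIdx n k, shuffleSign T.1 T.1ᶜ * ω T * ν (cplS T) := by
  rw [topCoeff, dif_pos (by omega : k + (n - k) = n)]
  rw [wedgeP]
  refine Finset.sum_congr rfl fun T _ => ?_
  rw [dif_pos (Finset.subset_univ _)]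
  have hc : Finset.univ \ T.1 = T.1ᶜ := (Finset.compl_eq_univ_sdiff T.1).symm
  congr 1

lemma star_formula (hk : k ≤ n) (B : Matrix (Fin n) (Fin n) ℝ)
    (star : KForm n k → KForm n (n - k))
    (hstar : ∀ ω μ : KForm n k, topCoeff (wedgeP ω (star μ)) = pairingA B ω μ)
    (μ : KForm n k) (U : FormIdx n (n - k)) :
    star μ U = shuffleSign U.1ᶜ U.1 *
      ∑ S : FormIdx n k, (B.submatrix (subEmb S) (subEmb (cplT hk U))).det * μ S := by
  have h1 := hstar (fun T => if T = cplT hk U then 1 else 0) μ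
  rw [topCoeff_wedge hk] at h1
  rw [pairingA] at h1
  simp only [mul_ite, ite_mul, one_mul, zero_mul, mul_zero, mul_one,
    Finset.sum_ite_eq', Finset.mem_univ, if_true] at h1
  rw [Finset.sum_comm] at h1
  simp only [Finset.sum_ite_eq', Finset.mem_univ, if_true] at h1
  have hUU : cplS (cplT hk U) = U := Subtype.ext (compl_compl _)
  have hs : shuffleSign (cplT hk U).1 ((cplT hk U).1)ᶜ = shuffleSign U.1ᶜ U.1 := by
    rw [show ((cplT hk U).1)ᶜ = U.1 from compl_compl _]
    rfl
  rw [hUU, hs] at h1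
  rw [← h1, ← mul_assoc, shuffleSign_sq, one_mul]

lemma subEmb_swap_low {T T' : FormIdx n k} {i j : Fin n}
    (hij : (i : ℕ) + 1 = (j : ℕ)) (hi : i ∉ T.1) (hj : j ∈ T.1)
    (hT' : T'.1 = insert i (T.1.erase j)) (a : Fin k) :
    subEmb T' a = Equiv.swap i j (subEmb T a) := by
  have hij' : i ≠ j := fun h => by rw [h] at hij; omega
  have hilt : i < j := by rw [Fin.lt_def]; omega
  have key : (fun a => Equiv.swap i j (subEmb T a)) = ⇑(T'.1.orderEmbOfFin T'.2) := by
    apply Finset.orderEmbOfFin_unique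
    · intro x
      rcases eq_or_ne (subEmb T x) j with h | h
      · rw [h, Equiv.swap_apply_right, hT']
        exact Finset.mem_insert_self _ _
      · have hxi : subEmb T x ≠ i := fun h' => hi (h' ▸ subEmb_mem T x)
        rw [Equiv.swap_apply_of_ne_of_ne hxi h, hT']
        exact Finset.mem_insert_of_mem (Finset.mem_erase.mpr ⟨h, subEmb_mem T x⟩)
    · intro a b hab
      show Equiv.swap i j (subEmb T a) < Equiv.swap i j (subEmb T b)
      have h1 : subEmb T a < subEmb T b := subEmb_strictMono T hab
      have hai : subEmb T a ≠ i := fun h' => hi (h' ▸ subEmb_mem T a)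
      have hbi : subEmb T b ≠ i := fun h' => hi (h' ▸ subEmb_mem T b)
      rcases eq_or_ne (subEmb T a) j with ha | ha
      · rcases eq_or_ne (subEmb T b) j with hb | hb
        · rw [← hb] at ha; exact absurd ha (ne_of_lt h1)
        · rw [ha, Equiv.swap_apply_right, Equiv.swap_apply_of_ne_of_ne hbi hb]
          exact hilt.trans (ha ▸ h1)
      · rcases eq_or_ne (subEmb T b) j with hb | hb
        · rw [hb, Equiv.swap_apply_right, Equiv.swap_apply_of_ne_of_ne hai ha]
          rw [Fin.lt_def] at h1 ⊢
          have h2 : (subEmb T a : ℕ) ≠ i := fun h' => hai (Fin.ext h')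
          rw [hb] at h1; omega
        · rw [Equiv.swap_apply_of_ne_of_ne hai ha, Equiv.swap_apply_of_ne_of_ne hbi hb]
          exact h1
  rw [show subEmb T' = ⇑(T'.1.orderEmbOfFin T'.2) from subEmb_def T', ← key]

lemma subEmb_swap_high {T T' : FormIdx n k} {i j : Fin n}
    (hij : (i : ℕ) + 1 = (j : ℕ)) (hi : i ∈ T.1) (hj : j ∉ T.1)
    (hT' : T'.1 = insert j (T.1.erase i)) (a : Fin k) :
    subEmb T' a = Equiv.swap i j (subEmb T a) := by
  have hij' : i ≠ j := fun h => by rw [h] at hij; omega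
  have hilt : i < j := by rw [Fin.lt_def]; omega
  have key : (fun a => Equiv.swap i j (subEmb T a)) = ⇑(T'.1.orderEmbOfFin T'.2) := by
    apply Finset.orderEmbOfFin_unique
    · intro x
      rcases eq_or_ne (subEmb T x) i with h | h
      · rw [h, Equiv.swap_apply_left, hT']
        exact Finset.mem_insert_self _ _
      · have hxj : subEmb T x ≠ j := fun h' => hj (h' ▸ subEmb_mem T x)
        rw [Equiv.swap_apply_of_ne_of_ne h hxj, hT']
        exact Finset.mem_insert_of_mem (Finset.mem_erase.mpr ⟨h, subEmb_mem T x⟩)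
    · intro a b hab
      show Equiv.swap i j (subEmb T a) < Equiv.swap i j (subEmb T b)
      have h1 : subEmb T a < subEmb T b := subEmb_strictMono T hab
      have haj : subEmb T a ≠ j := fun h' => hj (h' ▸ subEmb_mem T a)
      have hbj : subEmb T b ≠ j := fun h' => hj (h' ▸ subEmb_mem T b)
      rcases eq_or_ne (subEmb T a) i with ha | ha
      · rcases eq_or_ne (subEmb T b) i with hb | hb
        · rw [← hb] at ha; exact absurd ha (ne_of_lt h1)
        · rw [ha, Equiv.swap_apply_left, Equiv.swap_apply_of_ne_of_ne hb hbj]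
          rw [Fin.lt_def] at h1 ⊢
          have h2 : (subEmb T b : ℕ) ≠ j := fun h' => hbj (Fin.ext h')
          rw [ha] at h1; omega
      · rcases eq_or_ne (subEmb T b) i with hb | hb
        · rw [hb, Equiv.swap_apply_left, Equiv.swap_apply_of_ne_of_ne ha haj]
          exact h1.trans (hb ▸ hilt)
        · rw [Equiv.swap_apply_of_ne_of_ne ha haj, Equiv.swap_apply_of_ne_of_ne hb hbj]
          exact h1
  rw [show subEmb T' = ⇑(T'.1.orderEmbOfFin T'.2) from subEmb_def T', ← key]

def idx0 (hl : l ≤ n) : FormIdx n (n - l) :=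
  ⟨Finset.univ.map (Fin.castLEOrderEmb (Nat.sub_le n l)).toEmbedding, by
    rw [Finset.card_map, Finset.card_univ, Fintype.card_fin]⟩

lemma mem_idx0 (hl : l ≤ n) (x : Fin n) : x ∈ (idx0 hl).1 ↔ (x : ℕ) < n - l := by
  simp only [idx0, Finset.mem_map, Finset.mem_univ, true_and]
  constructor
  · rintro ⟨a, rfl⟩
    exact a.2
  · intro hx
    exact ⟨⟨x, hx⟩, rfl⟩

def blockEquiv (hl : l ≤ n) (T : FormIdx n (n - l)) : (Fin (n - l) ⊕ Fin l) ≃ Fin n := by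
  refine Equiv.ofBijective (Sum.elim (subEmb T) (subEmb (cplT hl T))) ?_
  rw [Fintype.bijective_iff_injective_and_card]
  constructor
  · rintro (a | a) (b | b) hab <;>
      simp only [Sum.elim_inl, Sum.elim_inr] at hab
    · rw [subEmb_injective T hab]
    · have h1 := subEmb_mem T a
      have h2 := subEmb_mem (cplT hl T) b
      rw [hab] at h1
      exact absurd h1 (Finset.mem_compl.mp h2)
    · have h1 := subEmb_mem T b
      have h2 := subEmb_mem (cplT hl T) a
      rw [← hab] at h1
      exact absurd h1 (Finset.mem_compl.mp h2)
    · rw [subEmb_injective (cplT hl T) hab]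
  · simp only [Fintype.card_sum, Fintype.card_fin]
    omega

lemma blockEquiv_inl (hl : l ≤ n) (T : FormIdx n (n - l)) (a : Fin (n - l)) :
    blockEquiv hl T (Sum.inl a) = subEmb T a := rfl

lemma blockEquiv_inr (hl : l ≤ n) (T : FormIdx n (n - l)) (b : Fin l) :
    blockEquiv hl T (Sum.inr b) = subEmb (cplT hl T) b := rfl

def permOf (hl : l ≤ n) (T : FormIdx n (n - l)) : Equiv.Perm (Fin n) :=
  (blockEquiv hl (idx0 hl)).symm.trans (blockEquiv hl T)

lemma permOf_idx0 (hl : l ≤ n) : permOf hl (idx0 hl) = Equiv.refl _ :=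
  Equiv.symm_trans_self _

lemma blockEquiv_swap (hl : l ≤ n) {T T' : FormIdx n (n - l)} {i j : Fin n}
    (hij : (i : ℕ) + 1 = (j : ℕ)) (hi : i ∉ T.1) (hj : j ∈ T.1)
    (hT' : T'.1 = insert i (T.1.erase j)) (x : Fin (n - l) ⊕ Fin l) :
    blockEquiv hl T' x = Equiv.swap i j (blockEquiv hl T x) := by
  cases x with
  | inl a =>
    rw [blockEquiv_inl, blockEquiv_inl]
    exact subEmb_swap_low hij hi hj hT' a
  | inr b =>
    have hij' : i ≠ j := fun h => by rw [h] at hij; omega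
    rw [blockEquiv_inr, blockEquiv_inr]
    refine subEmb_swap_high hij ?_ ?_ ?_ b
    · exact Finset.mem_compl.mpr hi
    · exact fun h => (Finset.mem_compl.mp h) hj
    · show T'.1ᶜ = insert j (T.1ᶜ.erase i)
      rw [hT', Finset.compl_insert, Finset.compl_erase, Finset.erase_insert_of_ne hij'.symm]

lemma permOf_swap (hl : l ≤ n) {T T' : FormIdx n (n - l)} {i j : Fin n}
    (hij : (i : ℕ) + 1 = (j : ℕ)) (hi : i ∉ T.1) (hj : j ∈ T.1)
    (hT' : T'.1 = insert i (T.1.erase j)) :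
    permOf hl T' = Equiv.swap i j * permOf hl T := by
  refine Equiv.ext fun x => ?_
  show blockEquiv hl T' ((blockEquiv hl (idx0 hl)).symm x)
      = Equiv.swap i j (blockEquiv hl T ((blockEquiv hl (idx0 hl)).symm x))
  exact blockEquiv_swap hl hij hi hj hT' _

lemma shuffleSign_swap {t t' : Finset (Fin n)} {i j : Fin n}
    (hij : (i : ℕ) + 1 = (j : ℕ)) (hi : i ∉ t) (hj : j ∈ t)
    (ht' : t' = insert i (t.erase j)) :
    shuffleSign t tᶜ = - shuffleSign t' t'ᶜ := by
  have hij' : i ≠ j := fun h => by rw [h] at hij; omega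
  set B := t.erase j with hB
  have hiB : i ∉ B := fun h => hi (Finset.mem_of_mem_erase h)
  have hjB : j ∉ B := Finset.notMem_erase j t
  have htB : t = insert j B := (Finset.insert_erase hj).symm
  set C := tᶜ.erase i with hC
  have hiC : i ∉ C := Finset.notMem_erase i tᶜ
  have hitc : i ∈ tᶜ := Finset.mem_compl.mpr hi
  have htc : tᶜ = insert i C := (Finset.insert_erase hitc).symm
  have ht'c : t'ᶜ = insert j C := by
    rw [ht', Finset.compl_insert, Finset.compl_erase, Finset.erase_insert_of_ne hij'.symm, hC]
  -- counting function
  have count_insert : ∀ (a : Fin n) (s : Finset (Fin n)) (x : Fin n), a ∉ s →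
      ((insert a s).filter (· < x)).card =
        (s.filter (· < x)).card + (if a < x then 1 else 0) := by
    intro a s x ha
    rw [Finset.filter_insert]
    split_ifs with h
    · rw [Finset.card_insert_of_notMem (fun hm => ha (Finset.mem_of_mem_filter a hm))]
    · rw [add_zero]
  have hcount : ∀ x ∈ B, (tᶜ.filter (· < x)).card = (t'ᶜ.filter (· < x)).card := by
    intro x hx
    have hxi : x ≠ i := fun h => hi (h ▸ Finset.mem_of_mem_erase hx)
    have hxj : x ≠ j := fun h => hjB (h ▸ hx)
    rw [htc, ht'c, count_insert i C x hiC, count_insert j C x (by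
      rw [hC]; exact fun h => (Finset.mem_compl.mp (Finset.mem_of_mem_erase h)) hj)]
    have hiff : i < x ↔ j < x := by
      rw [Fin.lt_def, Fin.lt_def]
      have h1 : (x : ℕ) ≠ i := fun h => hxi (Fin.ext h)
      have h2 : (x : ℕ) ≠ j := fun h => hxj (Fin.ext h)
      omega
    congr 1
    rcases Classical.em (i < x) with h | h
    · rw [if_pos h, if_pos (hiff.mp h)]
    · rw [if_neg h, if_neg (fun h' => h (hiff.mpr h'))]
  have hjC : j ∉ C := by
    rw [hC]; exact fun h => (Finset.mem_compl.mp (Finset.mem_of_mem_erase h)) hj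
  have hterm : (tᶜ.filter (· < j)).card = (t'ᶜ.filter (· < i)).card + 1 := by
    rw [htc, ht'c, count_insert i C j hiC, count_insert j C i hjC]
    rw [if_pos (by rw [Fin.lt_def]; omega), if_neg (by rw [Fin.lt_def]; omega)]
    congr 1
    · apply congrArg
      apply Finset.filter_congr
      intro x hx
      have hxi : x ≠ i := fun h => hiC (h ▸ hx)
      have h1 : (x : ℕ) ≠ i := fun h => hxi (Fin.ext h)
      have hiff : x < j ↔ x < i := by
        rw [Fin.lt_def, Fin.lt_def]; omega
      first
        | exact hiff
        | exact propext hiff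
        | simpa using hiff
  -- assemble
  have l1 : ∀ g : Fin n → ℕ, ∑ x ∈ t, g x = g j + ∑ x ∈ B, g x := fun g => by
    conv_lhs => rw [htB]
    rw [Finset.sum_insert hjB]
  have l2 : ∀ g : Fin n → ℕ, ∑ x ∈ t', g x = g i + ∑ x ∈ B, g x := fun g => by
    conv_lhs => rw [ht']
    rw [Finset.sum_insert hiB]
  have hc' : ∑ x ∈ B, (tᶜ.filter (· < x)).card = ∑ x ∈ B, (t'ᶜ.filter (· < x)).card :=
    Finset.sum_congr rfl hcount
  have key : (∑ x ∈ t, (tᶜ.filter (· < x)).card)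
      = (∑ x ∈ t', (t'ᶜ.filter (· < x)).card) + 1 := by
    rw [l1 (fun x => (tᶜ.filter (· < x)).card), l2 (fun x => (t'ᶜ.filter (· < x)).card)]
    omega
  rw [shuffleSign, shuffleSign, key, pow_succ]
  ring

lemma exists_adjacent (hl : l ≤ n) (T : FormIdx n (n - l)) (hT : T ≠ idx0 hl) :
    ∃ i j : Fin n, (i : ℕ) + 1 = (j : ℕ) ∧ i ∉ T.1 ∧ j ∈ T.1 := by
  by_contra hc
  push_neg at hc
  -- downward closure
  have down : ∀ (d : ℕ) (j : Fin n), j ∈ T.1 → ∀ i : Fin n, (i : ℕ) + d = (j : ℕ) → i ∈ T.1 := by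
    intro d
    induction d with
    | zero => intro j hj i hi; rwa [show i = j from Fin.ext (by omega)]
    | succ d ih =>
      intro j hj i hi
      have hd : (i : ℕ) + d < n := by have := j.2; omega
      set i' : Fin n := ⟨(i : ℕ) + d, hd⟩ with hi'
      have hi'T : i' ∈ T.1 := by
        by_contra hni
        exact absurd hj (hc i' j (by simp [hi']; omega) hni)
      exact ih i' hi'T i (by simp [hi'])
  -- every element is below n - l
  have below : ∀ x : Fin n, x ∈ T.1 → (x : ℕ) < n - l := by
    intro x hx
    have hsub : Finset.Iic x ⊆ T.1 := by
      intro y hy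
      have hyx0 : y ≤ x := Finset.mem_Iic.mp hy
      have hyx : (y : ℕ) ≤ (x : ℕ) := Fin.le_def.mp hyx0
      exact down ((x : ℕ) - (y : ℕ)) x hx y (by omega)
    have hcard := Finset.card_le_card hsub
    rw [Fin.card_Iic, T.2] at hcard
    omega
  have hsub : T.1 ⊆ (idx0 hl).1 := fun x hx => (mem_idx0 hl x).mpr (below x hx)
  have : T.1 = (idx0 hl).1 :=
    Finset.eq_of_subset_of_card_le hsub (by rw [T.2, (idx0 hl).2])
  exact hT (Subtype.ext this)

lemma sign_permOf (hl : l ≤ n) (T : FormIdx n (n - l)) :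
    ((Equiv.Perm.sign (permOf hl T) : ℤ) : ℝ) = shuffleSign T.1 T.1ᶜ := by
  set m := ∑ x ∈ T.1, (x : ℕ) with hm
  clear_value m
  induction m using Nat.strong_induction_on generalizing T with
  | _ m ih =>
  rcases eq_or_ne T (idx0 hl) with rfl | hT
  · rw [permOf_idx0]
    simp only [Equiv.Perm.sign_refl, Units.val_one, Int.cast_one]
    rw [shuffleSign]
    have : ∀ x ∈ (idx0 hl).1, (((idx0 hl).1ᶜ).filter (· < x)).card = 0 := by
      intro x hx
      rw [Finset.card_eq_zero, Finset.filter_eq_empty_iff]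
      intro y hy
      have hx' := (mem_idx0 hl x).mp hx
      have hy' : ¬ (y : ℕ) < n - l := fun h => (Finset.mem_compl.mp hy) ((mem_idx0 hl y).mpr h)
      rw [Fin.lt_def]
      omega
    rw [Finset.sum_congr rfl this, Finset.sum_const, smul_eq_mul, mul_zero, pow_zero]
  · obtain ⟨i, j, hij, hi, hj⟩ := exists_adjacent hl T hT
    have hij' : i ≠ j := fun h => by rw [h] at hij; omega
    set T' : FormIdx n (n - l) := ⟨insert i (T.1.erase j), by
      rw [Finset.card_insert_of_notMem (fun h => hi (Finset.mem_of_mem_erase h)),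
        Finset.card_erase_of_mem hj, T.2]
      have : 0 < n - l := by
        rcases Nat.eq_zero_or_pos (n - l) with h0 | h0
        · exfalso
          have hTc : T.1.card = 0 := by rw [T.2]; omega
          rw [Finset.card_eq_zero.mp hTc] at hj; simp at hj
        · exact h0
      omega⟩ with hT'def
    have hT' : T'.1 = insert i (T.1.erase j) := rfl
    have hm' : (∑ x ∈ T'.1, (x : ℕ)) < m := by
      rw [hm, hT']
      rw [Finset.sum_insert (fun h => hi (Finset.mem_of_mem_erase h))]
      have herase : ∑ x ∈ T.1.erase j, (x : ℕ) + (j : ℕ) = ∑ x ∈ T.1, (x : ℕ) :=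
        Finset.sum_erase_add T.1 _ hj
      omega
    have ihT' := ih _ hm' T' rfl
    have hperm := permOf_swap hl hij hi hj hT'
    have hsign : Equiv.Perm.sign (permOf hl T') = - Equiv.Perm.sign (permOf hl T) := by
      rw [hperm, map_mul, Equiv.Perm.sign_swap hij', neg_one_mul]
    have hshuf := shuffleSign_swap hij hi hj hT'.symm
    rw [hsign] at ihT'
    rw [hshuf]
    rw [← ihT']
    push_cast
    ring

section Laplace

variable (hl : l ≤ n) (M : Matrix (Fin n) (Fin n) ℝ) (S R : FormIdx n l)

/-- column-duplication map -/
def colMap : Fin n → Fin n :=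
  fun x => Sum.elim (subEmb (cplS S)) (subEmb R) ((blockEquiv hl (cplS S)).symm x)

/-- the permutation assembled from a block split and two block permutations -/
def asmPerm (T : FormIdx n (n - l)) (σ₁ : Equiv.Perm (Fin (n - l))) (σ₂ : Equiv.Perm (Fin l)) :
    Equiv.Perm (Fin n) :=
  permOf hl T * (blockEquiv hl (idx0 hl)).permCongr (Equiv.sumCongr σ₁ σ₂) * (permOf hl (cplS S))⁻¹

lemma colMap_apply (S R : FormIdx n l) (y : Fin (n - l) ⊕ Fin l) :
    colMap hl S R (blockEquiv hl (cplS S) y) = Sum.elim (subEmb (cplS S)) (subEmb R) y := by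
  show Sum.elim _ _ ((blockEquiv hl (cplS S)).symm (blockEquiv hl (cplS S) y)) = _
  rw [Equiv.symm_apply_apply]

lemma asmPerm_apply (T : FormIdx n (n - l)) (σ₁ : Equiv.Perm (Fin (n - l)))
    (σ₂ : Equiv.Perm (Fin l)) (x : Fin n) :
    asmPerm hl S T σ₁ σ₂ x
      = blockEquiv hl T ((Equiv.sumCongr σ₁ σ₂) ((blockEquiv hl (cplS S)).symm x)) := by
  simp [asmPerm, permOf, Equiv.Perm.mul_apply, Equiv.Perm.inv_def, Equiv.symm_trans_apply,
    Equiv.trans_apply, Equiv.symm_apply_apply, Equiv.permCongr_apply, Equiv.symm_symm]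

lemma sign_asmPerm (T : FormIdx n (n - l)) (σ₁ : Equiv.Perm (Fin (n - l)))
    (σ₂ : Equiv.Perm (Fin l)) :
    Equiv.Perm.sign (asmPerm hl S T σ₁ σ₂)
      = Equiv.Perm.sign (permOf hl T) * Equiv.Perm.sign (permOf hl (cplS S))
        * (Equiv.Perm.sign σ₁ * Equiv.Perm.sign σ₂) := by
  rw [asmPerm, map_mul, map_mul, map_inv, Equiv.Perm.sign_permCongr, Equiv.Perm.sign_sumCongr]
  rw [Int.units_inv_eq_self]
  rw [mul_right_comm]

lemma asmPerm_bijective :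
    Function.Bijective (fun p : FormIdx n (n - l) × Equiv.Perm (Fin (n - l)) × Equiv.Perm (Fin l)
      => asmPerm hl S p.1 p.2.1 p.2.2) := by
  rw [Fintype.bijective_iff_injective_and_card]
  constructor
  · rintro ⟨T, σ₁, σ₂⟩ ⟨T', σ₁', σ₂'⟩ hpq
    simp only at hpq
    have happ : ∀ x, asmPerm hl S T σ₁ σ₂ x = asmPerm hl S T' σ₁' σ₂' x :=
      fun x => congrFun (congrArg (fun (σ : Equiv.Perm (Fin n)) => ⇑σ) hpq) x
    have h1 : ∀ a : Fin (n - l), subEmb T (σ₁ a) = subEmb T' (σ₁' a) := by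
      intro a
      have := happ (blockEquiv hl (cplS S) (Sum.inl a))
      simp only [asmPerm_apply, Equiv.symm_apply_apply, Equiv.sumCongr_apply,
        Sum.map_inl] at this
      rwa [blockEquiv_inl, blockEquiv_inl] at this
    have h2 : ∀ b : Fin l, subEmb (cplT hl T) (σ₂ b) = subEmb (cplT hl T') (σ₂' b) := by
      intro b
      have := happ (blockEquiv hl (cplS S) (Sum.inr b))
      simp only [asmPerm_apply, Equiv.symm_apply_apply, Equiv.sumCongr_apply,
        Sum.map_inr] at this
      rwa [blockEquiv_inr, blockEquiv_inr] at this
    have hTT : T = T' := by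
      apply Subtype.ext
      apply Finset.eq_of_subset_of_card_le
      · intro y hy
        obtain ⟨a, ha⟩ := subEmb_surj T hy
        have := h1 (σ₁.symm a)
        rw [Equiv.apply_symm_apply, ha] at this
        rw [this]
        exact subEmb_mem T' _
      · rw [T.2, T'.2]
    subst hTT
    have hσ₁ : σ₁ = σ₁' := Equiv.ext fun a => subEmb_injective T (h1 a)
    have hσ₂ : σ₂ = σ₂' := Equiv.ext fun b => subEmb_injective (cplT hl T) (h2 b)
    rw [hσ₁, hσ₂]
  · rw [Fintype.card_prod, Fintype.card_prod, Fintype.card_perm, Fintype.card_perm,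
      Fintype.card_finset_len, Fintype.card_perm, Fintype.card_fin, Fintype.card_fin,
      Fintype.card_fin]
    have h1 : n.choose (n - l) * (n - l).factorial * (n - (n - l)).factorial = n.factorial :=
      Nat.choose_mul_factorial_mul_factorial (Nat.sub_le n l)
    rw [Nat.sub_sub_self hl] at h1
    rw [← h1]
    ring

end Laplace

lemma laplace (hl : l ≤ n) (M : Matrix (Fin n) (Fin n) ℝ) (S R : FormIdx n l) :
    ∑ T : FormIdx n (n - l), shuffleSign T.1 T.1ᶜ *
      ((M.submatrix (subEmb T) (subEmb (cplS S))).det *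
       (M.submatrix (subEmb (cplT hl T)) (subEmb R)).det)
    = if R = S then shuffleSign S.1ᶜ S.1 * M.det else 0 := by
  have hκ : ((Equiv.Perm.sign (permOf hl (cplS S)) : ℤ) : ℝ) = shuffleSign S.1ᶜ S.1 := by
    rw [sign_permOf]
    show shuffleSign S.1ᶜ S.1ᶜᶜ = _
    rw [compl_compl]
  have hκ2 : shuffleSign S.1ᶜ S.1 * shuffleSign S.1ᶜ S.1 = 1 := shuffleSign_sq _ _
  have step1 : (M.submatrix id (colMap hl S R)).det
      = shuffleSign S.1ᶜ S.1 * ∑ T : FormIdx n (n - l), shuffleSign T.1 T.1ᶜ *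
        ((M.submatrix (subEmb T) (subEmb (cplS S))).det *
         (M.submatrix (subEmb (cplT hl T)) (subEmb R)).det) := by
    rw [Matrix.det_apply']
    rw [← Fintype.sum_bijective _ (asmPerm_bijective hl S)
        (fun p => ((Equiv.Perm.sign (asmPerm hl S p.1 p.2.1 p.2.2) : ℤ) : ℝ)
          * ∏ i, (M.submatrix id (colMap hl S R)) (asmPerm hl S p.1 p.2.1 p.2.2 i) i)
        _ (fun p => rfl)]
    rw [Fintype.sum_prod_type]
    rw [Finset.mul_sum]
    refine Finset.sum_congr rfl fun T _ => ?_
    rw [Fintype.sum_prod_type]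
    have hprod : ∀ (σ₁ : Equiv.Perm (Fin (n - l))) (σ₂ : Equiv.Perm (Fin l)),
        (∏ i, (M.submatrix id (colMap hl S R)) (asmPerm hl S T σ₁ σ₂ i) i)
        = (∏ a, (M.submatrix (subEmb T) (subEmb (cplS S))) (σ₁ a) a)
          * ∏ b, (M.submatrix (subEmb (cplT hl T)) (subEmb R)) (σ₂ b) b := by
      intro σ₁ σ₂
      rw [← Equiv.prod_comp (blockEquiv hl (cplS S))
        (fun i => (M.submatrix id (colMap hl S R)) (asmPerm hl S T σ₁ σ₂ i) i)]
      rw [Fintype.prod_sum_type]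
      congr 1
      · refine Finset.prod_congr rfl fun a _ => ?_
        simp only [asmPerm_apply, Equiv.symm_apply_apply, Equiv.sumCongr_apply, Sum.map_inl,
          Matrix.submatrix_apply, id_eq, colMap, Sum.elim_inl]
        rw [blockEquiv_inl]
      · refine Finset.prod_congr rfl fun b _ => ?_
        simp only [asmPerm_apply, Equiv.symm_apply_apply, Equiv.sumCongr_apply, Sum.map_inr,
          Matrix.submatrix_apply, id_eq, colMap, Sum.elim_inr]
        rw [blockEquiv_inr]
    calc (∑ σ₁ : Equiv.Perm (Fin (n - l)), ∑ σ₂ : Equiv.Perm (Fin l),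
            ((Equiv.Perm.sign (asmPerm hl S T σ₁ σ₂) : ℤ) : ℝ)
            * ∏ i, (M.submatrix id (colMap hl S R)) (asmPerm hl S T σ₁ σ₂ i) i)
        = ∑ σ₁ : Equiv.Perm (Fin (n - l)), ∑ σ₂ : Equiv.Perm (Fin l),
            (shuffleSign T.1 T.1ᶜ * shuffleSign S.1ᶜ S.1) *
            ((((Equiv.Perm.sign σ₁ : ℤ) : ℝ)
                * ∏ a, (M.submatrix (subEmb T) (subEmb (cplS S))) (σ₁ a) a)
             * (((Equiv.Perm.sign σ₂ : ℤ) : ℝ)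
                * ∏ b, (M.submatrix (subEmb (cplT hl T)) (subEmb R)) (σ₂ b) b)) := by
          refine Finset.sum_congr rfl fun σ₁ _ => Finset.sum_congr rfl fun σ₂ _ => ?_
          rw [hprod, sign_asmPerm]
          push_cast
          rw [sign_permOf hl T, hκ]
          ring
      _ = shuffleSign S.1ᶜ S.1 * (shuffleSign T.1 T.1ᶜ *
            ((M.submatrix (subEmb T) (subEmb (cplS S))).det
              * (M.submatrix (subEmb (cplT hl T)) (subEmb R)).det)) := by
          rw [Matrix.det_apply', Matrix.det_apply', Finset.sum_mul_sum]
          simp only [Finset.mul_sum]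
          refine Finset.sum_congr rfl fun σ₁ _ => Finset.sum_congr rfl fun σ₂ _ => ?_
          ring
  rcases eq_or_ne R S with rfl | hRS
  · rw [if_pos rfl]
    have hid : colMap hl R R = id := by
      funext x
      obtain ⟨y, rfl⟩ := (blockEquiv hl (cplS R)).surjective x
      rw [colMap_apply, id_eq]
      cases y with
      | inl a =>
        rw [Sum.elim_inl, blockEquiv_inl]
      | inr b =>
        rw [Sum.elim_inr, blockEquiv_inr]
        have : cplT hl (cplS R) = R := Subtype.ext (compl_compl _)
        rw [this]
    rw [hid, Matrix.submatrix_id_id] at step1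
    calc (∑ T : FormIdx n (n - l), shuffleSign T.1 T.1ᶜ *
            ((M.submatrix (subEmb T) (subEmb (cplS R))).det *
             (M.submatrix (subEmb (cplT hl T)) (subEmb R)).det))
        = (shuffleSign R.1ᶜ R.1 * shuffleSign R.1ᶜ R.1) * ∑ T : FormIdx n (n - l),
            shuffleSign T.1 T.1ᶜ *
            ((M.submatrix (subEmb T) (subEmb (cplS R))).det *
             (M.submatrix (subEmb (cplT hl T)) (subEmb R)).det) := by
          rw [hκ2, one_mul]
      _ = shuffleSign R.1ᶜ R.1 * M.det := by
          rw [mul_assoc, ← step1]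
  · rw [if_neg hRS]
    have hnotinj : ¬ Function.Injective (colMap hl S R) := by
      intro hinj
      obtain ⟨e, heS, heR⟩ : ∃ e, e ∈ S.1 ∧ e ∉ R.1 := by
        by_contra hc
        push_neg at hc
        have hsub : S.1 ⊆ R.1 := fun e he => hc e he
        have : S.1 = R.1 := Finset.eq_of_subset_of_card_le hsub (by rw [S.2, R.2])
        exact hRS (Subtype.ext this.symm)
      obtain ⟨x, hx⟩ := Finite.injective_iff_surjective.mp hinj e
      obtain ⟨y, rfl⟩ := (blockEquiv hl (cplS S)).surjective x
      rw [colMap_apply] at hx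
      cases y with
      | inl a =>
        rw [Sum.elim_inl] at hx
        have := subEmb_mem (cplS S) a
        rw [hx] at this
        exact (Finset.mem_compl.mp this) heS
      | inr b =>
        rw [Sum.elim_inr] at hx
        have := subEmb_mem R b
        rw [hx] at this
        exact heR this
    have hab : ∃ a b, colMap hl S R a = colMap hl S R b ∧ a ≠ b := by
      unfold Function.Injective at hnotinj
      push_neg at hnotinj
      obtain ⟨a, b, h1, h2⟩ := hnotinj
      exact ⟨a, b, h1, h2⟩
    obtain ⟨a, b, h1, h2⟩ := hab
    have hdet0 : (M.submatrix id (colMap hl S R)).det = 0 := by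
      apply Matrix.det_zero_of_column_eq h2
      intro i
      simp only [Matrix.submatrix_apply, id_eq, h1]
    rw [hdet0] at step1
    calc (∑ T : FormIdx n (n - l), shuffleSign T.1 T.1ᶜ *
            ((M.submatrix (subEmb T) (subEmb (cplS S))).det *
             (M.submatrix (subEmb (cplT hl T)) (subEmb R)).det))
        = (shuffleSign S.1ᶜ S.1 * shuffleSign S.1ᶜ S.1) * ∑ T : FormIdx n (n - l),
            shuffleSign T.1 T.1ᶜ *
            ((M.submatrix (subEmb T) (subEmb (cplS S))).det *
             (M.submatrix (subEmb (cplT hl T)) (subEmb R)).det) := by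
          rw [hκ2, one_mul]
      _ = 0 := by rw [mul_assoc, ← step1, mul_zero]

lemma hswap_sign (hl : l ≤ n) (T : FormIdx n (n - l)) :
    shuffleSign T.1ᶜ T.1 = (-1 : ℝ) ^ (l * (n - l)) * shuffleSign T.1 T.1ᶜ := by
  have hd : Disjoint T.1 T.1ᶜ := disjoint_compl_right
  have hcm := shuffleSign_mul_comm hd
  have hsq := shuffleSign_sq T.1 T.1ᶜ
  have hcards : T.1.card * T.1ᶜ.card = (n - l) * l := by
    rw [T.2, Finset.card_compl, T.2, Fintype.card_fin, Nat.sub_sub_self hl]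
  calc shuffleSign T.1ᶜ T.1
      = (shuffleSign T.1 T.1ᶜ * shuffleSign T.1 T.1ᶜ) * shuffleSign T.1ᶜ T.1 := by
        rw [hsq, one_mul]
    _ = shuffleSign T.1 T.1ᶜ * (shuffleSign T.1 T.1ᶜ * shuffleSign T.1ᶜ T.1) := by ring
    _ = shuffleSign T.1 T.1ᶜ * (-1 : ℝ) ^ ((n - l) * l) := by rw [hcm, hcards]
    _ = (-1 : ℝ) ^ (l * (n - l)) * shuffleSign T.1 T.1ᶜ := by rw [Nat.mul_comm]; ring

lemma main_eval (hl : l ≤ n) (M : Matrix (Fin n) (Fin n) ℝ)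
    (star₁ : KForm n l → KForm n (n - l))
    (star₂ : KForm n (n - l) → KForm n (n - (n - l)))
    (h1 : ∀ (μ : KForm n l) (U : FormIdx n (n - l)), star₁ μ U = shuffleSign U.1ᶜ U.1 *
        ∑ R : FormIdx n l, (M.submatrix (subEmb (cplT hl U)) (subEmb R)).det * μ R)
    (h2 : ∀ (ν : KForm n (n - l)) (V : FormIdx n (n - (n - l))),
        star₂ ν V = shuffleSign V.1ᶜ V.1 *
        ∑ T : FormIdx n (n - l),
          (M.submatrix (subEmb T) (subEmb (cplT (Nat.sub_le n l) V))).det * ν T)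
    (μ : KForm n l) :
    castForm (Nat.sub_sub_self hl) (star₂ (star₁ μ))
      = ((-1 : ℝ) ^ (l * (n - l)) * M.det) • μ := by
  funext S
  show star₂ (star₁ μ) ⟨S.1, _⟩ = _
  rw [h2]
  have hc : cplT (Nat.sub_le n l)
      (⟨S.1, by rw [S.2]; omega⟩ : FormIdx n (n - (n - l))) = cplS S := Subtype.ext rfl
  rw [hc]
  have hsS : shuffleSign ((⟨S.1, by rw [S.2]; omega⟩ : FormIdx n (n - (n - l))).1)ᶜ
      ((⟨S.1, by rw [S.2]; omega⟩ : FormIdx n (n - (n - l))).1) = shuffleSign S.1ᶜ S.1 := rfl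
  rw [hsS]
  have e1 : ∀ T : FormIdx n (n - l),
      (M.submatrix (subEmb T) (subEmb (cplS S))).det * star₁ μ T
      = ∑ R : FormIdx n l, (-1 : ℝ) ^ (l * (n - l)) *
          (shuffleSign T.1 T.1ᶜ *
            ((M.submatrix (subEmb T) (subEmb (cplS S))).det *
             (M.submatrix (subEmb (cplT hl T)) (subEmb R)).det) * μ R) := by
    intro T
    rw [h1, hswap_sign hl T]
    simp only [Finset.mul_sum]
    exact Finset.sum_congr rfl fun R _ => by ring
  rw [Finset.sum_congr rfl fun T _ => e1 T]
  rw [Finset.sum_comm]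
  have e2 : ∀ R : FormIdx n l,
      (∑ T : FormIdx n (n - l), (-1 : ℝ) ^ (l * (n - l)) *
        (shuffleSign T.1 T.1ᶜ *
          ((M.submatrix (subEmb T) (subEmb (cplS S))).det *
           (M.submatrix (subEmb (cplT hl T)) (subEmb R)).det) * μ R))
      = (-1 : ℝ) ^ (l * (n - l)) *
          ((if R = S then shuffleSign S.1ᶜ S.1 * M.det else 0) * μ R) := by
    intro R
    rw [← laplace hl M S R]
    rw [Finset.sum_mul, Finset.mul_sum]
  rw [Finset.sum_congr rfl fun R _ => e2 R]
  simp only [ite_mul, zero_mul, mul_ite, mul_zero, Finset.sum_ite_eq', Finset.mem_univ, if_true]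
  show shuffleSign S.1ᶜ S.1 *
      ((-1 : ℝ) ^ (l * (n - l)) * (shuffleSign S.1ᶜ S.1 * M.det * μ S))
      = ((-1 : ℝ) ^ (l * (n - l)) * M.det) * μ S
  linear_combination ((-1 : ℝ) ^ (l * (n - l)) * M.det * μ S) * shuffleSign_sq S.1ᶜ S.1

lemma det_submatrix_transpose (B : Matrix (Fin n) (Fin n) ℝ) (V W : FormIdx n l) :
    (B.transpose.submatrix (subEmb V) (subEmb W)).det
      = (B.submatrix (subEmb W) (subEmb V)).det := by
  rw [← Matrix.transpose_submatrix, Matrix.det_transpose]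


end AuxProofs

/-- `*^A ∘ *^{Aᵗ} = *^{Aᵗ} ∘ *^A = (−1)^{l(n−l)} det(ι⁻¹Aᵗ) · Id` on `l`-forms, where the
twisted Hodge operators are characterized by `ω ∧ (*^B μ) = (ω|μ)_B dx` for `B = A, Aᵗ`. -/
theorem twisted_hodge_double {n l : ℕ} (hl : l ≤ n)
    (A : Matrix (Fin n) (Fin n) ℝ) (hA : IsUnit A.det)
    (starA₁ : KForm n l → KForm n (n - l))
    (starA₂ : KForm n (n - l) → KForm n (n - (n - l)))
    (starAt₁ : KForm n l → KForm n (n - l))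
    (starAt₂ : KForm n (n - l) → KForm n (n - (n - l)))
    (hA₁ : ∀ ω μ : KForm n l, topCoeff (wedgeP ω (starA₁ μ)) = pairingA A ω μ)
    (hA₂ : ∀ ω μ : KForm n (n - l), topCoeff (wedgeP ω (starA₂ μ)) = pairingA A ω μ)
    (hAt₁ : ∀ ω μ : KForm n l,
      topCoeff (wedgeP ω (starAt₁ μ)) = pairingA A.transpose ω μ)
    (hAt₂ : ∀ ω μ : KForm n (n - l),
      topCoeff (wedgeP ω (starAt₂ μ)) = pairingA A.transpose ω μ) :
    (∀ μ : KForm n l,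
      castForm (by omega) (starA₂ (starAt₁ μ))
        = ((-1 : ℝ) ^ (l * (n - l)) * A.transpose.det) • μ) ∧
    (∀ μ : KForm n l,
      castForm (by omega) (starAt₂ (starA₁ μ))
        = ((-1 : ℝ) ^ (l * (n - l)) * A.transpose.det) • μ) := by 
  constructor
  · intro μ
    have h1 : ∀ (μ : KForm n l) (U : FormIdx n (n - l)),
        starAt₁ μ U = shuffleSign U.1ᶜ U.1 *
          ∑ R : FormIdx n l, (A.submatrix (subEmb (cplT hl U)) (subEmb R)).det * μ R := by
      intro μ U
      rw [star_formula hl A.transpose starAt₁ hAt₁ μ U]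
      congr 1
      refine Finset.sum_congr rfl fun R _ => ?_
      rw [det_submatrix_transpose]
    have h2 : ∀ (ν : KForm n (n - l)) (V : FormIdx n (n - (n - l))),
        starA₂ ν V = shuffleSign V.1ᶜ V.1 *
          ∑ T : FormIdx n (n - l),
            (A.submatrix (subEmb T) (subEmb (cplT (Nat.sub_le n l) V))).det * ν T :=
      fun ν V => star_formula (Nat.sub_le n l) A starA₂ hA₂ ν V
    have := main_eval hl A starAt₁ starA₂ h1 h2 μ
    rw [Matrix.det_transpose]
    exact this
  · intro μ
    have h1 : ∀ (μ : KForm n l) (U : FormIdx n (n - l)),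
        starA₁ μ U = shuffleSign U.1ᶜ U.1 *
          ∑ R : FormIdx n l,
            (A.transpose.submatrix (subEmb (cplT hl U)) (subEmb R)).det * μ R := by
      intro μ U
      rw [star_formula hl A starA₁ hA₁ μ U]
      congr 1
      refine Finset.sum_congr rfl fun R _ => ?_
      rw [det_submatrix_transpose]
    have h2 : ∀ (ν : KForm n (n - l)) (V : FormIdx n (n - (n - l))),
        starAt₂ ν V = shuffleSign V.1ᶜ V.1 *
          ∑ T : FormIdx n (n - l),
            (A.transpose.submatrix (subEmb T) (subEmb (cplT (Nat.sub_le n l) V))).det * ν T :=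
      fun ν V => star_formula (Nat.sub_le n l) A.transpose starAt₂ hAt₂ ν V
    exact main_eval hl A.transpose starA₁ starAt₂ h1 h2 μ
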